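/- Let m be a Borel probability measure on ℝ, f : ℝ → ℝ strictly monotone increasing, and set ν = Measure.map f m. Then for every u ∈ ℝ, min(F_m(u), 1 − F_m(u)) = min(F_ν(f u), 1 − F_ν(f u)). Consequently, for every ε ≥ 0, the exogenous CDF naturalness measure of u exceeds ε if and only if the conditional CDF naturalness measure of f(u) exceeds ε; that is, the local ε-natural generation criteria based on Choice (2) and Choice (3) are equivalent under a strictly increasing structural function. -/
import Mathlib


open MeasureTheory

/-- The cumulative distribution function of a Borel measure on ℝ:
`F_m(x) = m((-∞, x])`. -/
noncomputable def cdfOf (m : Measure ℝ) (x : ℝ) : ℝ := (m (Set.Iic x)).toReal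

/-- The exogenous CDF naturalness measure (Choice (2)) of a noise value `u` agrees with
the conditional CDF naturalness measure (Choice (3)) of the generated outcome `f u`, when
the structural function `f` is strictly increasing; consequently, the local ε-natural
generation criteria based on the two measures are equivalent. -/
theorem naturalness_choice2_eq_choice3 (m : Measure ℝ) [IsProbabilityMeasure m]
    (f : ℝ → ℝ) (hf : StrictMono f) :
    (∀ u : ℝ,
      min (cdfOf m u) (1 - cdfOf m u)
        = min (cdfOf (Measure.map f m) (f u)) (1 - cdfOf (Measure.map f m) (f u)))
    ∧ ∀ ε : ℝ, 0 ≤ ε → ∀ u : ℝ,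
      (ε < min (cdfOf m u) (1 - cdfOf m u)
        ↔ ε < min (cdfOf (Measure.map f m) (f u)) (1 - cdfOf (Measure.map f m) (f u))) := by
  have key : ∀ u : ℝ, cdfOf (Measure.map f m) (f u) = cdfOf m u := by
    intro u
    unfold cdfOf
    rw [Measure.map_apply (hf.monotone.measurable) measurableSet_Iic]
    have : f ⁻¹' Set.Iic (f u) = Set.Iic u := by
      ext x; simp [hf.le_iff_le]
    rw [this]
  constructor
  · intro u; rw [key u]
  · intro ε _ u; rw [key u]
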